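/- Let ρ: g → so(V) be an indecomposable representation of a real solvable Lie algebra g on a Euclidean vector space V by skew-symmetric endomorphisms. Then either dim V = 1 and ρ = 0, or dim V = 2 and there exist a nonzero linear functional λ on g vanishing on [g,g] and an orthonormal basis (e,f) of V such that ρ(u)e = λ(u)f and ρ(u)f = −λ(u)e for all u; in particular ρ(u)² = −λ(u)² Id. -/

import Mathlib

set_option maxHeartbeats 1000000

open RealInnerProductSpace

attribute [local instance] LieRing.ofAssociativeRing


lemma trace_eq_sum_inner_aux {V : Type*} [NormedAddCommGroup V] [InnerProductSpace ℝ V]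
    [FiniteDimensional ℝ V] (T : Module.End ℝ V) :
    LinearMap.trace ℝ V T =
      ∑ i, ⟪(stdOrthonormalBasis ℝ V) i, T ((stdOrthonormalBasis ℝ V) i)⟫ := by
  set b := stdOrthonormalBasis ℝ V
  rw [LinearMap.trace_eq_matrix_trace ℝ b.toBasis, Matrix.trace]
  congr 1
  ext i
  rw [Matrix.diag_apply, LinearMap.toMatrix_apply, OrthonormalBasis.coe_toBasis,
    ← b.repr_apply_apply]
  rfl

lemma skew_eq_zero_of_trace_sq {V : Type*} [NormedAddCommGroup V] [InnerProductSpace ℝ V]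
    [FiniteDimensional ℝ V] {A : Module.End ℝ V}
    (hA : ∀ x y : V, ⟪A x, y⟫ = -⟪x, A y⟫)
    (h : LinearMap.trace ℝ V (A * A) = 0) : A = 0 := by
  set b := stdOrthonormalBasis ℝ V
  have h1 : LinearMap.trace ℝ V (A * A) = -∑ i, ⟪A (b i), A (b i)⟫ := by
    rw [trace_eq_sum_inner_aux, ← Finset.sum_neg_distrib]
    refine Finset.sum_congr rfl fun i _ => ?_
    have := hA (b i) (A (b i))
    rw [real_inner_comm] at this
    change ⟪b i, A (A (b i))⟫ = -⟪A (b i), A (b i)⟫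
    rw [this, neg_neg]
  rw [h1, neg_eq_zero] at h
  have hz : ∀ i, A (b i) = 0 := by
    intro i
    have hnn : ∀ i ∈ Finset.univ, (0:ℝ) ≤ ⟪A (b i), A (b i)⟫ := fun i _ => real_inner_self_nonneg
    have := (Finset.sum_eq_zero_iff_of_nonneg hnn).mp h i (Finset.mem_univ i)
    exact inner_self_eq_zero.mp this
  apply b.toBasis.ext
  intro i
  simpa using hz i

lemma rho_lie_eq_zero
    (g : Type*) [LieRing g] [LieAlgebra ℝ g] [LieAlgebra.IsSolvable g]
    (V : Type*) [NormedAddCommGroup V] [InnerProductSpace ℝ V] [FiniteDimensional ℝ V]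
    (ρ : g →ₗ⁅ℝ⁆ Module.End ℝ V)
    (hskew : ∀ (u : g) (x y : V), ⟪ρ u x, y⟫ = -⟪x, ρ u y⟫) :
    ∀ x y : g, ρ ⁅x, y⁆ = 0 := by
  classical
  set D1 : LieIdeal ℝ g := LieAlgebra.derivedSeries ℝ g 1 with hD1def
  set K : LieIdeal ℝ g := ρ.ker with hKdef
  -- the trace form on End V
  set tr : Module.End ℝ V →ₗ[ℝ] ℝ := LinearMap.trace ℝ V
  let C : LinearMap.BilinForm ℝ (Module.End ℝ V) :=
    LinearMap.mk₂ ℝ (fun A B => - tr (A * B))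
      (fun A A' B => by simp [add_mul]; exact add_comm _ _)
      (fun r A B => by simp [smul_mul_assoc])
      (fun A B B' => by simp [mul_add]; exact add_comm _ _)
      (fun r A B => by simp [mul_smul_comm])
  have hC : ∀ A B, C A B = - tr (A * B) := fun A B => rfl
  have hCrefl : C.IsRefl := by
    intro A B h
    rwa [hC, LinearMap.trace_mul_comm] at h
  set T : Submodule ℝ (Module.End ℝ V) :=
    Submodule.map (ρ : g →ₗ[ℝ] Module.End ℝ V) (D1 : Submodule ℝ g) with hTdef
  have hTskew : ∀ A ∈ T, ∀ x y : V, ⟪A x, y⟫ = -⟪x, A y⟫ := by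
    rintro A ⟨a, _, rfl⟩ x y
    exact hskew a x y
  have hTnd : (C.restrict T).Nondegenerate := by
    refine (LinearMap.IsRefl.nondegenerate_iff_separatingLeft (B := C.restrict T) (fun a b h => hCrefl _ _ h)).mpr ?_
    rintro ⟨A, hAT⟩ h
    have h0 := h ⟨A, hAT⟩
    have : C A A = 0 := h0
    rw [hC, neg_eq_zero] at this
    have : A = 0 := skew_eq_zero_of_trace_sq (hTskew A hAT) this
    exact Subtype.ext this
  have hcompl := C.isCompl_orthogonal_of_restrict_nondegenerate hCrefl hTnd
  have hsup : T ⊔ C.orthogonal T = ⊤ := hcompl.sup_eq_top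
  -- key vanishing claim
  have hzero : ∀ z w : g, (ρ w : Module.End ℝ V) ∈ C.orthogonal T → ρ ⁅z, w⁆ = 0 := by
    intro z w hw
    have hM : (ρ ⁅z, w⁆ : Module.End ℝ V) ∈ T := by
      refine Submodule.mem_map_of_mem ?_
      exact LieSubmodule.lie_mem_lie (LieSubmodule.mem_top z) (LieSubmodule.mem_top w)
    have horth : ∀ A ∈ T, C A (ρ ⁅z, w⁆) = 0 := by
      rintro A hAT
      obtain ⟨t, htD1, rfl⟩ := hAT
      have h1 : (ρ ⁅z, w⁆ : Module.End ℝ V) = ρ z * ρ w - ρ w * ρ z := by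
        rw [LieHom.map_lie]; rfl
      have h2 : C (ρ t) (ρ ⁅z, w⁆) = C (ρ ⁅t, z⁆) (ρ w) := by
        rw [h1, hC, hC]
        have : (ρ ⁅t, z⁆ : Module.End ℝ V) = ρ t * ρ z - ρ z * ρ t := by
          rw [LieHom.map_lie]; rfl
        rw [this, mul_sub, sub_mul, map_sub, map_sub]
        simp only [← mul_assoc]
        rw [LinearMap.trace_mul_comm (R := ℝ) (M := V) ((ρ t : Module.End ℝ V) * ρ w) ((ρ z : Module.End ℝ V)), ← mul_assoc]
      have hct : (C ((ρ : g →ₗ[ℝ] Module.End ℝ V) t)) (ρ ⁅z, w⁆) = (C (ρ t)) (ρ ⁅z, w⁆) := rfl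
      rw [hct, h2]
      have hT' : (ρ ⁅t, z⁆ : Module.End ℝ V) ∈ T := by
        refine Submodule.mem_map_of_mem ?_
        have : ⁅t, z⁆ = -⁅z, t⁆ := by rw [← lie_skew]
        rw [this]
        exact Submodule.neg_mem _ (D1.lie_mem htD1)
      exact hw _ hT'
    have : C (ρ ⁅z,w⁆) (ρ ⁅z,w⁆) = 0 := horth _ hM
    rw [hC, neg_eq_zero] at this
    exact skew_eq_zero_of_trace_sq (hskew ⁅z, w⁆) this
  -- D1 ≤ ⁅D1, D1⁆ ⊔ K
  have hstep : D1 ≤ ⁅D1, D1⁆ ⊔ K := by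
    have : D1 = ⁅(⊤ : LieIdeal ℝ g), (⊤ : LieIdeal ℝ g)⁆ := by
      rw [hD1def, LieAlgebra.derivedSeries_def, LieAlgebra.derivedSeriesOfIdeal_succ ℝ g ⊤ 0,
        LieAlgebra.derivedSeriesOfIdeal_zero]
    rw [this, LieSubmodule.lieIdeal_oper_eq_span, LieSubmodule.lieSpan_le]
    rintro m ⟨⟨x, -⟩, ⟨y, -⟩, rfl⟩
    have hx : (ρ x : Module.End ℝ V) ∈ T ⊔ C.orthogonal T := by rw [hsup]; trivial
    have hy : (ρ y : Module.End ℝ V) ∈ T ⊔ C.orthogonal T := by rw [hsup]; trivial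
    obtain ⟨P, hP, Q, hQ, hPQ⟩ := Submodule.mem_sup.mp hx
    obtain ⟨R, hR, S, hS, hRS⟩ := Submodule.mem_sup.mp hy
    obtain ⟨a, haD1, haP'⟩ := hP
    obtain ⟨c, hcD1, hcR'⟩ := hR
    have haP : (ρ a : Module.End ℝ V) = P := haP'
    have hcR : (ρ c : Module.End ℝ V) = R := hcR'
    have hb : (ρ (x - a) : Module.End ℝ V) ∈ C.orthogonal T := by
      rw [map_sub]
      rw [haP]
      rw [show (ρ x : Module.End ℝ V) = P + Q from hPQ.symm]
      simpa using hQ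
    have hd : (ρ (y - c) : Module.End ℝ V) ∈ C.orthogonal T := by
      rw [map_sub, hcR]
      rw [show (ρ y : Module.End ℝ V) = R + S from hRS.symm]
      simpa using hS
    have hsplit : ⁅x, y⁆ = ⁅a, c⁆ + (⁅a, y - c⁆ + (⁅x - a, c⁆ + ⁅x - a, y - c⁆)) := by
      conv_lhs => rw [show x = a + (x - a) from by abel, show y = c + (y - c) from by abel]
      simp only [add_lie, lie_add]
      abel
    rw [hsplit]
    have m1 : ⁅a, c⁆ ∈ (⁅D1, D1⁆ ⊔ K : LieIdeal ℝ g) :=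
      (le_sup_left : ⁅D1, D1⁆ ≤ _) (LieSubmodule.lie_mem_lie haD1 hcD1)
    have m2 : ⁅a, y - c⁆ ∈ (⁅D1, D1⁆ ⊔ K : LieIdeal ℝ g) :=
      (le_sup_right : K ≤ _) (LieHom.mem_ker.mpr (hzero a (y - c) hd))
    have m3 : ⁅x - a, c⁆ ∈ (⁅D1, D1⁆ ⊔ K : LieIdeal ℝ g) := by
      refine (le_sup_right : K ≤ _) (LieHom.mem_ker.mpr ?_)
      have := hzero c (x - a) hb
      have h' : ⁅x - a, c⁆ = -⁅c, x - a⁆ := by rw [← lie_skew]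
      rw [h', map_neg, this, neg_zero]
    have m4 : ⁅x - a, y - c⁆ ∈ (⁅D1, D1⁆ ⊔ K : LieIdeal ℝ g) :=
      (le_sup_right : K ≤ _) (LieHom.mem_ker.mpr (hzero (x - a) (y - c) hd))
    exact add_mem m1 (add_mem m2 (add_mem m3 m4))
  -- iterate
  have key : ∀ k : ℕ, D1 ≤ LieAlgebra.derivedSeries ℝ g (k + 1) ⊔ K := by
    intro k
    induction k with
    | zero => exact le_sup_left
    | succ k ih =>
      have h1 : (⁅D1, D1⁆ : LieIdeal ℝ g) ≤ LieAlgebra.derivedSeries ℝ g (k + 2) ⊔ K := by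
        have h2 := LieSubmodule.mono_lie ih ih
        rw [LieSubmodule.sup_lie, LieSubmodule.lie_sup, LieSubmodule.lie_sup] at h2
        refine h2.trans ?_
        have e1 : ⁅LieAlgebra.derivedSeries ℝ g (k+1), LieAlgebra.derivedSeries ℝ g (k+1)⁆ =
            LieAlgebra.derivedSeries ℝ g (k + 2) :=
          (LieAlgebra.derivedSeriesOfIdeal_succ ℝ g ⊤ (k+1)).symm
        refine sup_le (sup_le ?_ ?_) (sup_le ?_ ?_)
        · rw [e1]; exact le_sup_left
        · exact (LieSubmodule.lie_le_right _ _).trans le_sup_right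
        · exact (LieSubmodule.lie_le_left _ _).trans le_sup_right
        · exact (LieSubmodule.lie_le_right _ _).trans le_sup_right
      exact hstep.trans (sup_le h1 le_sup_right)
  obtain ⟨n, hn⟩ := LieAlgebra.IsSolvable.solvable (R := ℝ) (L := g)
  have hfin : D1 ≤ K := by
    have h1 := key n
    have h2 : LieAlgebra.derivedSeries ℝ g (n + 1) ≤ K := by
      have h3 : LieAlgebra.derivedSeries ℝ g (n+1) ≤ LieAlgebra.derivedSeries ℝ g n :=
        LieAlgebra.derivedSeriesOfIdeal_succ_le (R := ℝ) (L := g) (I := ⊤) (k := n)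
      rw [hn] at h3
      exact h3.trans bot_le
    exact h1.trans (sup_le h2 le_rfl)
  intro x y
  have : ⁅x, y⁆ ∈ D1 := by
    rw [hD1def, LieAlgebra.derivedSeries_def, LieAlgebra.derivedSeriesOfIdeal_succ ℝ g ⊤ 0,
      LieAlgebra.derivedSeriesOfIdeal_zero]
    exact LieSubmodule.lie_mem_lie (LieSubmodule.mem_top x) (LieSubmodule.mem_top y)
  exact LieHom.mem_ker.mp (hfin this)


/-- An indecomposable representation of a real solvable Lie algebra on a
(nonzero) Euclidean vector space by skew-symmetric endomorphisms is either trivial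
one-dimensional, or two-dimensional given by a rotation via a nonzero closed
functional `λ`, with `ρ(u)² = −λ(u)² Id`. -/
theorem indecomposable_euclidean_rep_solvable
    (g : Type*) [LieRing g] [LieAlgebra ℝ g] [FiniteDimensional ℝ g]
    [LieAlgebra.IsSolvable g]
    (V : Type*) [NormedAddCommGroup V] [InnerProductSpace ℝ V]
    [FiniteDimensional ℝ V] [Nontrivial V]
    (ρ : g →ₗ⁅ℝ⁆ Module.End ℝ V)
    (hskew : ∀ (u : g) (x y : V), ⟪ρ u x, y⟫ = -⟪x, ρ u y⟫)
    (hind : ∀ W : Submodule ℝ V, (∀ (u : g), ∀ x ∈ W, ρ u x ∈ W) → W = ⊥ ∨ W = ⊤) :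
    (Module.finrank ℝ V = 1 ∧ ∀ (u : g) (x : V), ρ u x = 0) ∨
    (Module.finrank ℝ V = 2 ∧
      ∃ l : g →ₗ[ℝ] ℝ, l ≠ 0 ∧ (∀ x y : g, l ⁅x, y⁆ = 0) ∧
        ∃ e f : V, ⟪e, e⟫ = 1 ∧ ⟪f, f⟫ = 1 ∧ ⟪e, f⟫ = 0 ∧
          (∀ u : g, ρ u e = l u • f ∧ ρ u f = -(l u) • e) ∧
          (∀ u : g, (ρ u) ^ 2 = -((l u) ^ 2) • (1 : Module.End ℝ V))) := by
  classical
  have hker : ∀ x y : g, ρ ⁅x, y⁆ = 0 := rho_lie_eq_zero g V ρ hskew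
  have hcomm : ∀ u v : g, ρ u * ρ v = ρ v * ρ u := by
    intro u v
    have h := hker u v
    rw [LieHom.map_lie] at h
    have h2 : (ρ u : Module.End ℝ V) * ρ v - ρ v * ρ u = 0 := h
    rw [sub_eq_zero] at h2
    exact h2
  by_cases hall : ∀ u : g, ρ u = 0
  · left
    refine ⟨?_, fun u x => by rw [hall u]; rfl⟩
    obtain ⟨x, hx⟩ := exists_ne (0 : V)
    have hinv : ∀ (u : g), ∀ y ∈ Submodule.span ℝ {x}, ρ u y ∈ Submodule.span ℝ {x} := by
      intro u y _
      rw [hall u]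
      simpa using Submodule.zero_mem _
    rcases hind _ hinv with h | h
    · exact absurd (h ▸ Submodule.mem_span_singleton_self x) (by simp [hx])
    · rw [← finrank_top ℝ V, ← h, finrank_span_singleton hx]
  · right
    push_neg at hall
    obtain ⟨u₀, hu₀⟩ := hall
    set A : Module.End ℝ V := ρ u₀ with hAdef
    -- symmetric operators commuting with the action are scalar
    have hscalar : ∀ S : Module.End ℝ V, S.IsSymmetric →
        (∀ u : g, ρ u * S = S * ρ u) → ∃ c : ℝ, ∀ x : V, S x = c • x := by
      intro S hS hcom
      obtain ⟨c, hc⟩ : ∃ c, Module.End.HasEigenvalue S c :=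
        ⟨_, hS.hasEigenvalue_iSup_of_finiteDimensional⟩
      have hinv : ∀ (u : g), ∀ y ∈ Module.End.eigenspace S c, ρ u y ∈ Module.End.eigenspace S c := by
        intro u y hy
        rw [Module.End.mem_eigenspace_iff] at hy ⊢
        have : S (ρ u y) = ρ u (S y) := by
          have := hcom u
          exact (LinearMap.congr_fun this y).symm
        rw [this, hy, map_smul]
      rcases hind _ hinv with h | h
      · exact absurd h hc
      · exact ⟨c, fun x => Module.End.mem_eigenspace_iff.mp (h ▸ Submodule.mem_top)⟩
    -- A^2 is symmetric
    have hA2sym : (A * A).IsSymmetric := by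
      intro x y
      have h1 := hskew u₀ (A x) y
      have h2 := hskew u₀ x (A y)
      simp only [Module.End.mul_apply]
      rw [h1, h2, neg_neg]
    have hA2comm : ∀ u : g, ρ u * (A * A) = (A * A) * ρ u := by
      intro u
      rw [hAdef, ← mul_assoc, hcomm u u₀, mul_assoc, hcomm u u₀, ← mul_assoc]
    obtain ⟨c, hc⟩ := hscalar (A * A) hA2sym hA2comm
    have hAA : ∀ x : V, A (A x) = c • x := fun x => hc x
    -- c < 0
    have hAex : ∃ x : V, A x ≠ 0 := by
      by_contra h
      push_neg at h
      exact hu₀ (LinearMap.ext fun x => h x)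
    obtain ⟨x₁, hx₁⟩ := hAex
    have hx₁0 : x₁ ≠ 0 := fun h => hx₁ (by rw [h]; simp)
    have hcneg : c < 0 := by
      have h1 : ⟪A (A x₁), x₁⟫ = -⟪A x₁, A x₁⟫ := hskew u₀ (A x₁) x₁
      rw [hAA x₁] at h1
      rw [real_inner_smul_left] at h1
      have h2 : (0:ℝ) < ⟪A x₁, A x₁⟫ := by
        rw [real_inner_self_eq_norm_mul_norm]
        have := norm_pos_iff.mpr hx₁
        nlinarith
      have h3 : (0:ℝ) < ⟪x₁, x₁⟫ := by
        rw [real_inner_self_eq_norm_mul_norm]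
        have := norm_pos_iff.mpr hx₁0
        nlinarith
      nlinarith
    set μ : ℝ := Real.sqrt (-c) with hμdef
    have hμpos : 0 < μ := Real.sqrt_pos.mpr (by linarith)
    have hμsq : μ * μ = -c := Real.mul_self_sqrt (by linarith)
    have hμne : μ ≠ 0 := ne_of_gt hμpos
    set J : Module.End ℝ V := μ⁻¹ • A with hJdef
    have hc' : c = -(μ * μ) := by linarith
    have hJ2 : ∀ x : V, J (J x) = -x := by
      intro x
      rw [hJdef]
      simp only [LinearMap.smul_apply, map_smul]
      rw [hAA x, hc']
      match_scalars
      field_simp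
    have hJskew : ∀ x y : V, ⟪J x, y⟫ = -⟪x, J y⟫ := by
      intro x y
      rw [hJdef]
      simp only [LinearMap.smul_apply]
      rw [real_inner_smul_left, real_inner_smul_right, hskew u₀ x y]
      ring
    have hJcomm : ∀ u : g, ρ u * J = J * ρ u := by
      intro u
      rw [hJdef, mul_smul_comm, smul_mul_assoc, hcomm u u₀]
    -- every ρ v is a multiple of J
    have hrho : ∀ v : g, ∃ t : ℝ, ∀ x : V, ρ v x = t • J x := by
      intro v
      have hsymP : (ρ v * J).IsSymmetric := by
        intro x y
        simp only [Module.End.mul_apply]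
        rw [hskew v (J x) y]
        rw [show ⟪J x, ρ v y⟫ = -⟪x, J (ρ v y)⟫ from hJskew x (ρ v y)]
        rw [neg_neg]
        congr 1
        exact LinearMap.congr_fun (hJcomm v).symm y
      have hcomP : ∀ u : g, ρ u * (ρ v * J) = (ρ v * J) * ρ u := by
        intro u
        rw [← mul_assoc, hcomm u v, mul_assoc, hJcomm u, ← mul_assoc]
      obtain ⟨d, hd⟩ := hscalar _ hsymP hcomP
      refine ⟨-d, fun x => ?_⟩
      have h1 := hd (J x)
      simp only [Module.End.mul_apply] at h1
      rw [hJ2 x] at h1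
      have h2 : ρ v (-x) = -(ρ v x) := map_neg _ _
      rw [h2] at h1
      have := neg_eq_iff_eq_neg.mp h1
      rw [this]
      simp [neg_smul]
    -- choose e and f
    obtain ⟨x₀, hx₀⟩ := exists_ne (0 : V)
    set e : V := ‖x₀‖⁻¹ • x₀ with hedef
    have hx₀n : ‖x₀‖ ≠ 0 := norm_ne_zero_iff.mpr hx₀
    have hee : ⟪e, e⟫ = 1 := by
      rw [hedef, real_inner_smul_left, real_inner_smul_right, real_inner_self_eq_norm_mul_norm]
      field_simp
    set f : V := J e with hfdef
    have hff : ⟪f, f⟫ = 1 := by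
      rw [hfdef]
      rw [hJskew e (J e), hJ2 e]
      rw [show ⟪e, -e⟫ = -⟪e,e⟫ by rw [inner_neg_right]]
      rw [neg_neg, hee]
    have hef : ⟪e, f⟫ = 0 := by
      have h1 : ⟪J e, e⟫ = -⟪e, J e⟫ := hJskew e e
      rw [real_inner_comm] at h1
      have : (2:ℝ) * ⟪e, J e⟫ = 0 := by linarith
      rw [hfdef]
      linarith
    -- the functional
    set l : g →ₗ[ℝ] ℝ :=
      { toFun := fun u => ⟪ρ u e, f⟫
        map_add' := fun u v => by simp [map_add, LinearMap.add_apply, inner_add_left]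
        map_smul' := fun r u => by simp [map_smul, LinearMap.smul_apply, real_inner_smul_left] } with hldef
    have hl : ∀ u : g, l u = ⟪ρ u e, f⟫ := fun u => rfl
    have hlJ : ∀ v : g, ∀ x : V, ρ v x = l v • J x := by
      intro v
      obtain ⟨t, ht⟩ := hrho v
      have hlv : l v = t := by
        rw [hl, ht e, ← hfdef, real_inner_smul_left, hff, mul_one]
      intro x
      rw [ht x, hlv]
    have hrules : ∀ u : g, ρ u e = l u • f ∧ ρ u f = -(l u) • e := by
      intro u
      constructor
      · rw [hlJ u e]
      · rw [hlJ u f, hJ2 e]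
        simp [neg_smul, smul_neg]
    have hAe : A e = μ • f := by
      rw [hfdef, hJdef]
      simp only [LinearMap.smul_apply]
      rw [smul_smul]
      field_simp
      rw [one_smul]
    have hlu₀ : l u₀ = μ := by
      rw [hl, ← hAdef, hAe, real_inner_smul_left, hff, mul_one]
    have hlne : l ≠ 0 := by
      intro h
      rw [h] at hlu₀
      simp at hlu₀
      exact hμne hlu₀.symm
    have hlclosed : ∀ x y : g, l ⁅x, y⁆ = 0 := by
      intro x y
      rw [hl, hker x y]
      simp
    have hsq : ∀ u : g, (ρ u) ^ 2 = -((l u) ^ 2) • (1 : Module.End ℝ V) := by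
      intro u
      ext x
      rw [pow_two]
      simp only [Module.End.mul_apply, LinearMap.smul_apply, Module.End.one_apply]
      rw [hlJ u x, map_smul, hlJ u (J x), hJ2 x]
      match_scalars
      ring
    -- finrank = 2
    have hene : e ≠ 0 := by
      intro h
      rw [h] at hee
      simp at hee
    have hfr : Module.finrank ℝ V = 2 := by
      set W : Submodule ℝ V := Submodule.span ℝ {e, f} with hWdef
      have heW : e ∈ W := Submodule.subset_span (by simp)
      have hfW : f ∈ W := Submodule.subset_span (by simp)
      have hWinv : ∀ (u : g), ∀ x ∈ W, ρ u x ∈ W := by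
        intro u x hx
        refine Submodule.span_induction ?_ ?_ ?_ ?_ hx
        · rintro y (rfl | rfl)
          · rw [(hrules u).1]; exact Submodule.smul_mem _ _ hfW
          · rw [(hrules u).2]; exact Submodule.smul_mem _ _ heW
        · simp
        · intro a b _ _ ha hb; rw [map_add]; exact add_mem ha hb
        · intro r a _ ha; rw [map_smul]; exact Submodule.smul_mem _ _ ha
      have hWtop : W = ⊤ := by
        rcases hind W hWinv with h | h
        · exfalso
          rw [h] at heW
          exact hene (by simpa using heW)
        · exact h
      have hon : Orthonormal ℝ ![e, f] := by
        rw [orthonormal_iff_ite]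
        intro i j
        fin_cases i <;> fin_cases j <;>
          simp [hee, hff, hef, real_inner_comm f e, show ‖e‖ = 1 from by have := hee; rw [real_inner_self_eq_norm_mul_norm] at this; nlinarith [norm_nonneg e], show ‖f‖ = 1 from by have := hff; rw [real_inner_self_eq_norm_mul_norm] at this; nlinarith [norm_nonneg f], show ⟪f, e⟫ = 0 from by rw [real_inner_comm]; exact hef]
      have hsp : ⊤ ≤ Submodule.span ℝ (Set.range ![e, f]) := by
        have hr : Set.range ![e, f] = {e, f} := by
          ext z
          simp [Fin.exists_fin_two, or_comm]
        rw [hr, ← hWdef, hWtop]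
      let b := Module.Basis.mk hon.linearIndependent hsp
      rw [Module.finrank_eq_card_basis b, Fintype.card_fin]
    exact ⟨hfr, l, hlne, hlclosed, e, f, hee, hff, hef, hrules, hsq⟩
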